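/- For any real α > 0, the function Y₁(y) = |y|^{α/2} cos( (α/2) θ ) / (1+|y|^α), written in polar coordinates y = (r cos θ, r sin θ), satisfies ΔY₁(y) + ( 2α² |y|^{α-2} / (1+|y|^α)² ) Y₁(y) = 0 for all y ≠ 0. -/

import Mathlib

open Real MeasureTheory

/-- The kernel element Y₁(r,θ) = r^{α/2} cos(αθ/2)/(1+r^α) of the linearized singular
Liouville operator, expressed in polar coordinates y = (r cos θ, r sin θ), solves the
equation with the Laplacian written in polar form:
Δ = ∂²/∂r² + (1/r)∂/∂r + (1/r²)∂²/∂θ². -/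
theorem stmt6 (α : ℝ) (hα : 0 < α)
    (Y₁ : ℝ → ℝ → ℝ)
    (hY₁ : ∀ r θ, Y₁ r θ = r ^ (α / 2) * Real.cos ((α / 2) * θ) / (1 + r ^ α)) :
    ∀ r θ : ℝ, 0 < r →
      deriv (fun s => deriv (fun s' => Y₁ s' θ) s) r
        + (1 / r) * deriv (fun s => Y₁ s θ) r
        + (1 / r ^ 2) * deriv (fun t => deriv (fun t' => Y₁ r t') t) θ
        + (2 * α ^ 2 * r ^ (α - 2) / (1 + r ^ α) ^ 2) * Y₁ r θ = 0 := by
  intro r θ hr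
  set a : ℝ := α / 2 with ha
  set c : ℝ := Real.cos (a * θ) with hcθ
  have hGpos : ∀ s : ℝ, 0 < s → 0 < s ^ (-a) + s ^ a := fun s hs =>
    add_pos (Real.rpow_pos_of_pos hs _) (Real.rpow_pos_of_pos hs _)
  have hG : ∀ s : ℝ, 0 < s → HasDerivAt (fun u : ℝ => u ^ (-a) + u ^ a)
      (-a * s ^ (-a - 1) + a * s ^ (a - 1)) s := fun s hs =>
    (Real.hasDerivAt_rpow_const (p := -a) (Or.inl hs.ne')).add
      (Real.hasDerivAt_rpow_const (p := a) (Or.inl hs.ne'))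
  have hG1 : ∀ s : ℝ, 0 < s → HasDerivAt (fun u : ℝ => -a * u ^ (-a - 1) + a * u ^ (a - 1))
      (-a * ((-a - 1) * s ^ (-a - 1 - 1)) + a * ((a - 1) * s ^ (a - 1 - 1))) s := fun s hs =>
    ((Real.hasDerivAt_rpow_const (p := -a - 1) (Or.inl hs.ne')).const_mul (-a)).add
      ((Real.hasDerivAt_rpow_const (p := a - 1) (Or.inl hs.ne')).const_mul a)
  -- Y₁ s θ = c / (s^{-a} + s^a) for s > 0
  have hYeq : ∀ s : ℝ, 0 < s → Y₁ s θ = c * (s ^ (-a) + s ^ a)⁻¹ := by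
    intro s hs
    have hx : (0:ℝ) < s ^ a := Real.rpow_pos_of_pos hs a
    have e1 : s ^ (-a) = (s ^ a)⁻¹ := Real.rpow_neg hs.le a
    have e6 : s ^ α = s ^ a * s ^ a := by
      rw [← Real.rpow_add hs]; congr 1; rw [ha]; ring
    have h1 : (0:ℝ) < 1 + s ^ a * s ^ a := by positivity
    have h2 : ((s ^ a)⁻¹ + s ^ a) ≠ 0 := by positivity
    rw [hY₁, e6, e1, hcθ]
    field_simp
  -- first radial derivative
  have hD1 : ∀ s : ℝ, 0 < s → HasDerivAt (fun u => Y₁ u θ)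
      (c * (-(-a * s ^ (-a - 1) + a * s ^ (a - 1)) / (s ^ (-a) + s ^ a) ^ 2)) s := by
    intro s hs
    have h := ((hG s hs).inv (hGpos s hs).ne').const_mul c
    refine h.congr_of_eventuallyEq ?_
    filter_upwards [Ioi_mem_nhds hs] with u hu
    exact hYeq u hu
  -- second radial derivative
  have hD2 : HasDerivAt (fun s => deriv (fun u => Y₁ u θ) s)
      (c * ((-(-a * ((-a - 1) * r ^ (-a - 1 - 1)) + a * ((a - 1) * r ^ (a - 1 - 1))) *
            (r ^ (-a) + r ^ a) ^ 2 -
          -(-a * r ^ (-a - 1) + a * r ^ (a - 1)) *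
            (2 * (r ^ (-a) + r ^ a) ^ 1 * (-a * r ^ (-a - 1) + a * r ^ (a - 1)))) /
        ((r ^ (-a) + r ^ a) ^ 2) ^ 2)) r := by
    have h := (((hG1 r hr).neg.div ((hG r hr).pow 2)
      (pow_ne_zero 2 (hGpos r hr).ne')).const_mul c)
    refine h.congr_of_eventuallyEq ?_
    filter_upwards [Ioi_mem_nhds hr] with u hu
    rw [(hD1 u hu).deriv]
    rfl
  -- angular derivatives
  set K : ℝ := r ^ a / (1 + r ^ α) with hK
  have hYt : (fun t => Y₁ r t) = fun t => K * Real.cos (a * t) := by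
    funext t; rw [hY₁, hK]; ring
  have hθ1 : ∀ t : ℝ, HasDerivAt (fun t' => Y₁ r t') (K * (-Real.sin (a * t) * a)) t := by
    intro t
    have h : HasDerivAt (fun t' : ℝ => a * t') a t := by
      simpa using (hasDerivAt_id t).const_mul a
    have h2 := (h.cos).const_mul K
    refine h2.congr_of_eventuallyEq ?_
    filter_upwards with u
    rw [hY₁, hK]; ring
  have hθ2 : deriv (fun t => deriv (fun t' => Y₁ r t') t) θ = K * (-(c * a) * a) := by
    have houter : (fun t => deriv (fun t' => Y₁ r t') t) = fun t => K * (-Real.sin (a * t) * a) := by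
      funext t; exact (hθ1 t).deriv
    rw [houter]
    have h : HasDerivAt (fun t' : ℝ => a * t') a θ := by
      simpa using (hasDerivAt_id θ).const_mul a
    have h2 := ((h.sin.neg.mul_const a).const_mul K)
    rw [(show HasDerivAt (fun t => K * (-Real.sin (a * t) * a)) (K * (-(Real.cos (a * θ) * a) * a)) θ from h2).deriv, hcθ]
  rw [hD2.deriv, (hD1 r hr).deriv, hθ2, hY₁ r θ]
  -- convert all rpow's to powers of x := r ^ a
  have hx : (0:ℝ) < r ^ a := Real.rpow_pos_of_pos hr a
  have e1 : r ^ (-a) = (r ^ a)⁻¹ := Real.rpow_neg hr.le a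
  have e2 : r ^ (a - 1) = r ^ a / r := by rw [Real.rpow_sub hr, Real.rpow_one]
  have e3 : r ^ (-a - 1) = (r ^ a)⁻¹ / r := by rw [Real.rpow_sub hr, Real.rpow_one, e1]
  have e4 : r ^ (a - 1 - 1) = r ^ a / (r * r) := by
    rw [Real.rpow_sub hr, Real.rpow_sub hr, Real.rpow_one, div_div]
  have e5 : r ^ (-a - 1 - 1) = (r ^ a)⁻¹ / (r * r) := by
    rw [Real.rpow_sub hr, Real.rpow_sub hr, Real.rpow_one, e1, div_div]
  have e6 : r ^ α = r ^ a * r ^ a := by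
    rw [← Real.rpow_add hr]; congr 1; rw [ha]; ring
  have e7 : r ^ (α - 2) = r ^ a * r ^ a / (r * r) := by
    rw [show α - 2 = a + a - 1 - 1 by rw [ha]; ring, Real.rpow_sub hr, Real.rpow_sub hr,
      Real.rpow_one, Real.rpow_add hr, div_div]
  have h1 : (0:ℝ) < 1 + r ^ a * r ^ a := by positivity
  have h2 : ((r ^ a)⁻¹ + r ^ a) ≠ 0 := by positivity
  rw [hK, e7, e6, e2, e3, e4, e5, e1, show α = a + a by rw [ha]; ring]
  field_simp
  ring
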